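/- Let n ≥ 1 and p ≥ 1 be integers, let N = n + p + 1, and let h : [0,∞) → (0,∞) be a continuous increasing function with lim_{t→∞} h(t)/t = 0. Consider the Hartogs domain Ω = {(z,w) ∈ ℂ^{n+1} × ℂ^p : ‖w‖ < h(‖z‖)} ⊆ ℂ^N. Then the closure of Ω in ℙ^N meets the hyperplane at infinity H = ℙ^N \ ℂ^N exactly in the projectivization L ≅ ℙ^n of the linear subspace ℂ^{n+1} × {0} ⊆ ℂ^N; that is, Ω_∞ = L. -/

import Mathlib

open scoped Manifold
open Topology Set Filter Function

noncomputable section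

instance {K V : Type*} [DivisionRing K] [AddCommGroup V] [Module K V] [TopologicalSpace V] :
    TopologicalSpace (Projectivization K V) :=
  instTopologicalSpaceQuotient

/-- The standard affine chart `ℂᴺ → ℙᴺ`, sending `x` to `[1 : x]`.  Here `ℙᴺ` is realized
as the projectivization of `ℂ × ℂᴺ`. -/
def affineToProj {E : Type*} [AddCommGroup E] [Module ℂ E] (x : E) :
    Projectivization ℂ (ℂ × E) :=
  Projectivization.mk ℂ ((1 : ℂ), x) (fun h => one_ne_zero (congrArg Prod.fst h))

/-- The hyperplane at infinity `H = ℙᴺ \ ℂᴺ`: the points of `ℙᴺ` whose first homogeneous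
coordinate vanishes. -/
def hyperplaneAtInfinity (E : Type*) [AddCommGroup E] [Module ℂ E] :
    Set (Projectivization ℂ (ℂ × E)) :=
  {P | P.rep.1 = 0}

/-- The limit set at infinity of a subset `A ⊆ ℂᴺ`: the intersection of the closure
of `A` in `ℙᴺ` with the hyperplane at infinity. -/
def limitSet {E : Type*} [AddCommGroup E] [Module ℂ E] [TopologicalSpace E] (A : Set E) :
    Set (Projectivization ℂ (ℂ × E)) :=
  closure (affineToProj '' A) ∩ hyperplaneAtInfinity E

/-- The projectivization of a linear subspace `W ⊆ ℂ × ℂᴺ`, as a subset of `ℙᴺ`. -/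
def projSubspace {E : Type*} [AddCommGroup E] [Module ℂ E] (W : Submodule ℂ (ℂ × E)) :
    Set (Projectivization ℂ (ℂ × E)) :=
  {P | P.rep ∈ W}

section AuxLemmas
open scoped Pointwise

variable {V : Type*} [AddCommGroup V] [Module ℂ V] [TopologicalSpace V]
  [ContinuousConstSMul ℂ V] [T1Space V]

lemma isOpenMap_projMk : IsOpenMap (Projectivization.mk' ℂ (V := V)) := by
  intro U hU
  letI : Setoid {v : V // v ≠ 0} := projectivizationSetoid ℂ V
  change @IsOpen (Quotient (projectivizationSetoid ℂ V)) instTopologicalSpaceQuotient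
    (Projectivization.mk' ℂ '' U)
  rw [← (isQuotientMap_quotient_mk').isOpen_preimage]
  have key : (Quotient.mk' : {v : V // v ≠ 0} → Projectivization ℂ V) ⁻¹' (Projectivization.mk' ℂ '' U) =
      Subtype.val ⁻¹' (⋃ c : ℂˣ, (c : ℂ) • (Subtype.val '' U)) := by
    ext x
    simp only [mem_preimage, mem_image, mem_iUnion, mem_smul_set]
    constructor
    · rintro ⟨u, hu, hux⟩
      have : Projectivization.mk' ℂ u = Projectivization.mk' ℂ x := hux
      rw [Projectivization.mk'_eq_mk, Projectivization.mk'_eq_mk,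
        Projectivization.mk_eq_mk_iff] at this
      obtain ⟨a, ha⟩ := this
      exact ⟨a⁻¹, ⟨u, ⟨u, hu, rfl⟩, by rw [← ha]; simp [Units.smul_def, smul_smul,
        inv_mul_cancel₀ a.ne_zero]⟩⟩
    · rintro ⟨c, ⟨_, ⟨u, hu, rfl⟩, hcx⟩⟩
      refine ⟨u, hu, ?_⟩
      show Projectivization.mk' ℂ u = Projectivization.mk' ℂ x
      rw [Projectivization.mk'_eq_mk, Projectivization.mk'_eq_mk,
        Projectivization.mk_eq_mk_iff]
      exact ⟨c⁻¹, by rw [← hcx]; simp [Units.smul_def, smul_smul, Units.val_inv_eq_inv_val,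
        inv_mul_cancel₀ c.ne_zero]⟩
  rw [key]
  exact (isOpen_iUnion fun c =>
    ((isOpen_ne : IsOpen {v : V | v ≠ 0}).isOpenMap_subtype_val U hU).smul₀ c.ne_zero).preimage
    continuous_subtype_val

end AuxLemmas

section AuxLemmas2
open scoped Pointwise

lemma mem_closure_affineToProj {E : Type*} [AddCommGroup E] [Module ℂ E] [TopologicalSpace E]
    [ContinuousConstSMul ℂ E] [T1Space E] (A : Set E) (P : Projectivization ℂ (ℂ × E)) :
    P ∈ closure (affineToProj '' A) ↔
      P.rep ∈ closure {x : ℂ × E | ∃ c : ℂ, c ≠ 0 ∧ ∃ v ∈ A, x = c • ((1 : ℂ), v)} := by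
  letI : Setoid {x : ℂ × E // x ≠ 0} := projectivizationSetoid ℂ (ℂ × E)
  set q : {x : ℂ × E // x ≠ 0} → Projectivization ℂ (ℂ × E) := Projectivization.mk' ℂ with hq
  have hq_cont : Continuous q := continuous_quotient_mk'
  have hq_open : IsOpenMap q := isOpenMap_projMk
  set ι : E → {x : ℂ × E // x ≠ 0} :=
    fun v => ⟨((1 : ℂ), v), fun h => one_ne_zero (congrArg Prod.fst h)⟩ with hι
  set U : Set {x : ℂ × E // x ≠ 0} := ι '' A with hU
  have himg : affineToProj '' A = q '' U := by
    rw [hU, image_image]; rfl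
  have hPrep : q ⟨P.rep, P.rep_nonzero⟩ = P := by
    rw [hq, Projectivization.mk'_eq_mk]; exact P.mk_rep
  have h1 : P ∈ closure (q '' U) ↔
      (⟨P.rep, P.rep_nonzero⟩ : {x : ℂ × E // x ≠ 0}) ∈ q ⁻¹' closure (q '' U) := by
    rw [mem_preimage, hPrep]
  have hset : Subtype.val '' (q ⁻¹' (q '' U)) =
      {x : ℂ × E | ∃ c : ℂ, c ≠ 0 ∧ ∃ v ∈ A, x = c • ((1 : ℂ), v)} := by
    ext x
    constructor
    · rintro ⟨y, hy, rfl⟩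
      rw [mem_preimage] at hy
      obtain ⟨u, hu, huy⟩ := hy
      obtain ⟨v, hv, rfl⟩ := hu
      rw [hq, Projectivization.mk'_eq_mk, Projectivization.mk'_eq_mk] at huy
      obtain ⟨a, ha⟩ := (Projectivization.mk_eq_mk_iff ℂ _ _ _ _).1 huy
      refine ⟨((a : ℂ))⁻¹, inv_ne_zero a.ne_zero, v, hv, ?_⟩
      simp only [hι] at ha
      rw [← ha]
      simp [Units.smul_def, smul_smul, inv_mul_cancel₀ a.ne_zero]
    · rintro ⟨c, hc, v, hv, rfl⟩
      have hx : c • ((1 : ℂ), v) ≠ 0 := by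
        intro h0
        exact hc (by simpa using congrArg Prod.fst h0)
      refine ⟨⟨_, hx⟩, ?_, rfl⟩
      rw [mem_preimage]
      refine ⟨ι v, ⟨v, hv, rfl⟩, ?_⟩
      show Projectivization.mk ℂ ((1 : ℂ), v) (ι v).2 = Projectivization.mk ℂ _ hx
      rw [Projectivization.mk_eq_mk_iff']
      exact ⟨c⁻¹, by simp [smul_smul, inv_mul_cancel₀ hc]⟩
  rw [himg, h1, hq_open.preimage_closure_eq_closure_preimage hq_cont, closure_subtype, hset]

lemma hartogs_forward {E₁ E₂ : Type*} [NormedAddCommGroup E₁] [NormedSpace ℂ E₁]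
    [NormedAddCommGroup E₂] [NormedSpace ℂ E₂]
    (h : ℝ → ℝ) (hmono : MonotoneOn h (Ici 0)) (hpos : ∀ t ∈ Ici (0:ℝ), 0 < h t)
    (hlim : Tendsto (fun t => h t / t) atTop (nhds 0))
    (x : ℂ × E₁ × E₂) (h1 : x.1 = 0)
    (hx : x ∈ closure {y : ℂ × E₁ × E₂ | ∃ c : ℂ, c ≠ 0 ∧
      ∃ v ∈ {v : E₁ × E₂ | ‖v.2‖ < h ‖v.1‖}, y = c • ((1 : ℂ), v)}) :
    x.2.2 = 0 := by
  obtain ⟨y, hy, hylim⟩ := mem_closure_iff_seq_limit.1 hx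
  choose c hc v hv hyeq using hy
  have hy1 : ∀ k, (y k).1 = c k := fun k => by rw [hyeq k]; simp
  have hy21 : ∀ k, (y k).2.1 = c k • (v k).1 := fun k => by rw [hyeq k]; rfl
  have hy22 : ∀ k, (y k).2.2 = c k • (v k).2 := fun k => by rw [hyeq k]; rfl
  have hc0 : Tendsto c atTop (𝓝 (0:ℂ)) := by
    have h' := (continuous_fst.tendsto x).comp hylim
    simpa [Function.comp_def, hy1, h1] using h'
  have hz : Tendsto (fun k => ‖c k‖ * ‖(v k).1‖) atTop (𝓝 ‖x.2.1‖) := by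
    have h' := ((continuous_norm.comp (continuous_fst.comp continuous_snd)).tendsto x).comp hylim
    simpa [Function.comp_def, hy21, norm_smul] using h'
  have hw : Tendsto (fun k => ‖c k‖ * ‖(v k).2‖) atTop (𝓝 ‖x.2.2‖) := by
    have h' := ((continuous_norm.comp (continuous_snd.comp continuous_snd)).tendsto x).comp hylim
    simpa [Function.comp_def, hy22, norm_smul] using h'
  have hcn : Tendsto (fun k => ‖c k‖) atTop (𝓝 (0:ℝ)) := by simpa using hc0.norm
  set z1 := ‖x.2.1‖ with hz1
  have key : Tendsto (fun k => ‖c k‖ * h ‖(v k).1‖) atTop (𝓝 0) := by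
    rw [Metric.tendsto_atTop]
    intro ε hε
    have hz1nn : 0 ≤ z1 := norm_nonneg _
    have hδ : 0 < ε / (2 * (z1 + 1)) := by positivity
    obtain ⟨T₀, hT₀⟩ := (Metric.tendsto_atTop.1 hlim) _ hδ
    set T := max T₀ 1 with hT
    have hT1 : (1:ℝ) ≤ T := le_max_right _ _
    have hTpos : (0:ℝ) < T := lt_of_lt_of_le one_pos hT1
    have hhT : 0 < h T := hpos T (le_of_lt hTpos)
    have E1 : ∀ᶠ k in atTop, ‖c k‖ < ε / (2 * h T) :=
      hcn.eventually_lt_const (by positivity)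
    have E2 : ∀ᶠ k in atTop, ‖c k‖ * ‖(v k).1‖ < z1 + 1 :=
      hz.eventually_lt_const (by linarith)
    obtain ⟨N, hN⟩ := eventually_atTop.1 (E1.and E2)
    refine ⟨N, fun k hk => ?_⟩
    obtain ⟨hk1, hk2⟩ := hN k hk
    have hvnn : (0:ℝ) ≤ ‖(v k).1‖ := norm_nonneg _
    have hhpos : 0 < h ‖(v k).1‖ := hpos _ hvnn
    rw [Real.dist_eq, sub_zero, abs_of_nonneg (mul_nonneg (norm_nonneg _) hhpos.le)]
    rcases le_or_gt ‖(v k).1‖ T with hle | hgt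
    · calc ‖c k‖ * h ‖(v k).1‖ ≤ ‖c k‖ * h T :=
            mul_le_mul_of_nonneg_left (hmono hvnn hTpos.le hle) (norm_nonneg _)
        _ < (ε / (2 * h T)) * h T := mul_lt_mul_of_pos_right hk1 hhT
        _ = ε / 2 := by field_simp
        _ < ε := by linarith
    · have hvpos : 0 < ‖(v k).1‖ := lt_trans hTpos hgt
      have hT' := hT₀ ‖(v k).1‖ (le_trans (le_max_left _ _) hgt.le)
      rw [Real.dist_eq, sub_zero] at hT'
      have h2 : h ‖(v k).1‖ < (ε / (2 * (z1 + 1))) * ‖(v k).1‖ :=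
        (div_lt_iff₀ hvpos).1 (lt_of_le_of_lt (le_abs_self _) hT')
      calc ‖c k‖ * h ‖(v k).1‖
          ≤ ‖c k‖ * ((ε / (2 * (z1 + 1))) * ‖(v k).1‖) :=
            mul_le_mul_of_nonneg_left h2.le (norm_nonneg _)
        _ = (ε / (2 * (z1 + 1))) * (‖c k‖ * ‖(v k).1‖) := by ring
        _ ≤ (ε / (2 * (z1 + 1))) * (z1 + 1) :=
            mul_le_mul_of_nonneg_left hk2.le hδ.le
        _ = ε / 2 := by field_simp
        _ < ε := by linarith
  have hsq : Tendsto (fun k => ‖c k‖ * ‖(v k).2‖) atTop (𝓝 0) :=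
    squeeze_zero (fun k => mul_nonneg (norm_nonneg _) (norm_nonneg _))
      (fun k => mul_le_mul_of_nonneg_left (le_of_lt (hv k)) (norm_nonneg _)) key
  have := tendsto_nhds_unique hw hsq
  simpa using this

lemma hartogs_backward {E₁ E₂ : Type*} [NormedAddCommGroup E₁] [NormedSpace ℂ E₁]
    [NormedAddCommGroup E₂] [NormedSpace ℂ E₂]
    (h : ℝ → ℝ) (hpos : ∀ t ∈ Ici (0:ℝ), 0 < h t)
    (x : ℂ × E₁ × E₂) (h1 : x.1 = 0) (h2 : x.2.2 = 0) :
    x ∈ closure {y : ℂ × E₁ × E₂ | ∃ c : ℂ, c ≠ 0 ∧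
      ∃ v ∈ {v : E₁ × E₂ | ‖v.2‖ < h ‖v.1‖}, y = c • ((1 : ℂ), v)} := by
  obtain ⟨a, z, w⟩ := x
  dsimp at h1 h2
  subst h1; subst h2
  apply mem_closure_iff_seq_limit.2
  refine ⟨fun k => (((k:ℂ)+1)⁻¹, z, 0), fun k => ?_, ?_⟩
  · have hk : ((k:ℂ)+1) ≠ 0 := Nat.cast_add_one_ne_zero k
    refine ⟨((k:ℂ)+1)⁻¹, inv_ne_zero hk, (((k:ℂ)+1) • z, 0), ?_, ?_⟩
    · show ‖(0 : E₂)‖ < h ‖((k:ℂ)+1) • z‖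
      rw [norm_zero]; exact hpos _ (norm_nonneg _)
    · show (((k:ℂ)+1)⁻¹, z, (0:E₂)) = ((k:ℂ)+1)⁻¹ • ((1:ℂ), ((k:ℂ)+1) • z, (0:E₂))
      simp [Prod.smul_mk, smul_smul, inv_mul_cancel₀ hk]
  · have hinvR : Tendsto (fun k : ℕ => ((k:ℝ)+1)⁻¹) atTop (𝓝 0) :=
      tendsto_inv_atTop_zero.comp (tendsto_atTop_add_const_right _ 1 tendsto_natCast_atTop_atTop)
    have hinv : Tendsto (fun k : ℕ => ((k:ℂ)+1)⁻¹) atTop (𝓝 0) := by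
      have := (Complex.continuous_ofReal.tendsto 0).comp hinvR
      simpa [Function.comp_def] using this
    exact hinv.prodMk_nhds tendsto_const_nhds

end AuxLemmas2

/-- Let `h : [0,∞) → (0,∞)` be continuous and increasing with
`h(t)/t → 0` as `t → ∞`, and let `Ω = {(z,w) ∈ ℂ^{n+1} × ℂᵖ : ‖w‖ < h ‖z‖}` be the
corresponding Hartogs domain in `ℂᴺ`, `N = n + p + 1`. Then the limit set of `Ω` at
infinity is exactly the projectivization `L ≅ ℙⁿ` of the linear subspace
`ℂ^{n+1} × {0} ⊆ ℂᴺ`. -/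
theorem limit_set_of_hartogs_domain
    (n p : ℕ) (hn : 1 ≤ n) (hp : 1 ≤ p)
    (h : ℝ → ℝ) (hcont : ContinuousOn h (Ici 0)) (hmono : MonotoneOn h (Ici 0))
    (hpos : ∀ t ∈ Ici (0 : ℝ), 0 < h t)
    (hlim : Tendsto (fun t => h t / t) atTop (nhds 0)) :
    limitSet {v : EuclideanSpace ℂ (Fin (n + 1)) × EuclideanSpace ℂ (Fin p) |
        ‖v.2‖ < h ‖v.1‖} =
      projSubspace ((⊥ : Submodule ℂ ℂ).prod
        (((⊤ : Submodule ℂ (EuclideanSpace ℂ (Fin (n + 1))))).prod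
          (⊥ : Submodule ℂ (EuclideanSpace ℂ (Fin p))))) := by
  ext P
  simp only [limitSet, projSubspace, hyperplaneAtInfinity, mem_inter_iff, mem_setOf_eq,
    Submodule.mem_prod, Submodule.mem_bot, Submodule.mem_top, true_and]
  rw [mem_closure_affineToProj]
  constructor
  · rintro ⟨hcl, h0⟩
    exact ⟨h0, hartogs_forward h hmono hpos hlim P.rep h0 hcl⟩
  · rintro ⟨h0, hw⟩
    exact ⟨hartogs_backward h hpos P.rep h0 hw, h0⟩
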